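/- Suppose α : ℝ → ℝ is C², positive, and satisfies α'' = (1+2α⁻⁶)⁻¹[6α⁻⁷(α')² + b²α⁻³] with b ≠ 0 and the energy identity (1+2α⁻⁶)(α')² + b²α⁻² = e₀ > 0. Then α''(t) > 0 for all t, α(t) ≥ |b|/√e₀ for all t, α'(t) is strictly increasing with α'(t) → √e₀ as t → ∞, and 0 < √e₀ − α'(t) ≲ t⁻² for t ≫ 1. -/

import Mathlib

open Filter Topology
noncomputable section

set_option maxHeartbeats 1000000 in
/-- rotational swirling flow: α'' > 0, α ≥ |b|/√e₀, α' strictly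
increasing with α'(t) → √e₀, and 0 < √e₀ - α'(t) ≲ t⁻² for large t. -/
theorem stmt16 (α : ℝ → ℝ) (b e₀ : ℝ)
    (hα : ContDiff ℝ 2 α) (hαpos : ∀ t : ℝ, 0 < α t)
    (hb : b ≠ 0) (he₀ : 0 < e₀)
    (hODE : ∀ t : ℝ, deriv (deriv α) t
      = (1 + 2 / α t ^ 6)⁻¹ * (6 * (deriv α t) ^ 2 / α t ^ 7 + b ^ 2 / α t ^ 3))
    (henergy : ∀ t : ℝ, (1 + 2 / α t ^ 6) * (deriv α t) ^ 2 + b ^ 2 / α t ^ 2 = e₀) :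
    (∀ t : ℝ, 0 < deriv (deriv α) t) ∧
    (∀ t : ℝ, |b| / Real.sqrt e₀ ≤ α t) ∧
    StrictMono (deriv α) ∧
    Tendsto (deriv α) atTop (nhds (Real.sqrt e₀)) ∧
    ∃ T K : ℝ, 1 ≤ T ∧ 0 < K ∧ ∀ t : ℝ, T ≤ t →
      0 < Real.sqrt e₀ - deriv α t ∧ Real.sqrt e₀ - deriv α t ≤ K / t ^ 2 := by
  -- differentiability
  have hdiff : Differentiable ℝ α ∧ Differentiable ℝ (deriv α) := by
    rw [show (2 : WithTop ℕ∞) = 1 + 1 from rfl, contDiff_succ_iff_deriv] at hα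
    exact ⟨hα.1, (contDiff_one_iff_deriv.mp hα.2.2).1⟩
  have hb2 : (0:ℝ) < b ^ 2 := lt_of_le_of_ne (sq_nonneg b) (Ne.symm (pow_ne_zero 2 hb))
  have hse : (0:ℝ) < Real.sqrt e₀ := Real.sqrt_pos.mpr he₀
  have hse2 : Real.sqrt e₀ ^ 2 = e₀ := Real.sq_sqrt he₀.le
  -- cleared energy identity
  have hE : ∀ t : ℝ, (α t ^ 6 + 2) * (deriv α t) ^ 2 + b ^ 2 * α t ^ 4 = e₀ * α t ^ 6 := by
    intro t
    have hA := hαpos t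
    have h := henergy t
    field_simp at h
    have hA2 : (α t)^2 ≠ 0 := by positivity
    apply mul_right_cancel₀ hA2
    linear_combination (α t)^2 * h
  -- α'' > 0
  have hacc : ∀ t : ℝ, 0 < deriv (deriv α) t := by
    intro t
    have hA := hαpos t
    rw [hODE t]
    have h1 : (0:ℝ) < 1 + 2 / α t ^ 6 := by positivity
    have h2 : (0:ℝ) < b ^ 2 / α t ^ 3 := by positivity
    have h3 : (0:ℝ) ≤ 6 * (deriv α t) ^ 2 / α t ^ 7 := by positivity
    exact mul_pos (inv_pos.mpr h1) (by linarith)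
  -- d² < e₀ at each t
  have hd2 : ∀ t : ℝ, (deriv α t) ^ 2 < e₀ := by
    intro t
    have hA := hαpos t
    have h := hE t
    nlinarith [pow_pos hA 6, pow_pos hA 4, sq_nonneg (deriv α t)]
  have hdlt : ∀ t : ℝ, deriv α t < Real.sqrt e₀ := by
    intro t
    nlinarith [hd2 t, hse]
  -- lower bound on α
  have hαlb : ∀ t : ℝ, |b| / Real.sqrt e₀ ≤ α t := by
    intro t
    have hA := hαpos t
    rw [div_le_iff₀ hse]
    have h : b ^ 2 ≤ e₀ * α t ^ 2 := by
      nlinarith [hE t, pow_pos hA 4,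
        mul_nonneg (by positivity : (0:ℝ) ≤ α t ^ 6 + 2) (sq_nonneg (deriv α t))]
    calc |b| = Real.sqrt (b ^ 2) := (Real.sqrt_sq_eq_abs b).symm
      _ ≤ Real.sqrt (e₀ * α t ^ 2) := Real.sqrt_le_sqrt h
      _ = α t * Real.sqrt e₀ := by
          rw [Real.sqrt_mul he₀.le, Real.sqrt_sq hA.le]; ring
  have hmono : StrictMono (deriv α) := strictMono_of_deriv_pos hacc
  -- there exists a point where α' > 0
  have hpos : ∃ t₀ : ℝ, 0 < deriv α t₀ := by
    by_contra hcon
    push_neg at hcon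
    have hαle : ∀ t : ℝ, 0 ≤ t → α t ≤ α 0 := by
      intro t ht
      have h2 := image_sub_le_mul_sub_of_deriv_le hdiff.1 (C := 0) hcon ht
      nlinarith [h2]
    set c : ℝ := |b| / Real.sqrt e₀ with hc
    have hcpos : 0 < c := by
      have : 0 < |b| := abs_pos.mpr hb
      positivity
    set δ : ℝ := (1 + 2 / c ^ 6)⁻¹ * (b ^ 2 / α 0 ^ 3) with hδ
    have hδpos : 0 < δ := by
      have h0 := hαpos 0
      have h1 : (0:ℝ) < 1 + 2 / c ^ 6 := by positivity
      exact mul_pos (inv_pos.mpr h1) (div_pos hb2 (by positivity))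
    have hδle : ∀ x : ℝ, 0 ≤ x → δ ≤ deriv (deriv α) x := by
      intro x hx
      have hA := hαpos x
      have h1 : α x ≤ α 0 := hαle x hx
      have hc2 : c ≤ α x := hαlb x
      have h0 := hαpos 0
      rw [hODE x]
      have e1 : (1 + 2 / c ^ 6)⁻¹ ≤ (1 + 2 / α x ^ 6)⁻¹ := by
        gcongr
      have e2 : b ^ 2 / α 0 ^ 3 ≤ 6 * (deriv α x) ^ 2 / α x ^ 7 + b ^ 2 / α x ^ 3 := by
        have e3 : b ^ 2 / α 0 ^ 3 ≤ b ^ 2 / α x ^ 3 := by gcongr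
        have e4 : (0:ℝ) ≤ 6 * (deriv α x) ^ 2 / α x ^ 7 := by positivity
        linarith
      calc δ = (1 + 2 / c ^ 6)⁻¹ * (b ^ 2 / α 0 ^ 3) := rfl
        _ ≤ (1 + 2 / α x ^ 6)⁻¹ * (6 * (deriv α x) ^ 2 / α x ^ 7 + b ^ 2 / α x ^ 3) := by
            apply mul_le_mul e1 e2 (by positivity) (by positivity)
    have hgrow0 : ∀ x : ℝ, 0 ≤ x → δ * x ≤ deriv α x - deriv α 0 := by
      intro x hx
      have := (convex_Ici (0:ℝ)).mul_sub_le_image_sub_of_le_deriv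
        (hdiff.2.continuous.continuousOn) (hdiff.2.differentiableOn)
        (fun y hy => hδle y (by rw [interior_Ici] at hy; exact le_of_lt hy))
        0 (Set.self_mem_Ici) x hx hx
      simpa using this
    set t₁ : ℝ := max 0 ((1 + |deriv α 0|) / δ) with ht₁def
    have ht₁ : 0 ≤ t₁ := le_max_left _ _
    have h2 := hgrow0 t₁ ht₁
    have h3 : 1 + |deriv α 0| ≤ δ * t₁ := by
      have : (1 + |deriv α 0|) / δ ≤ t₁ := le_max_right _ _
      rw [div_le_iff₀ hδpos] at this
      linarith [this]
    have h4 := hcon t₁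
    have h5 := neg_abs_le (deriv α 0)
    linarith
  obtain ⟨t₀, ht₀⟩ := hpos
  set m : ℝ := deriv α t₀ with hm
  -- growth of α for t ≥ t₀
  have hgrow : ∀ t : ℝ, t₀ ≤ t → m * (t - t₀) ≤ α t - α t₀ := by
    intro t ht
    exact (convex_Ici t₀).mul_sub_le_image_sub_of_le_deriv
      (hdiff.1.continuous.continuousOn) (hdiff.1.differentiableOn)
      (fun y hy => hmono.monotone (by rw [interior_Ici] at hy; exact le_of_lt hy))
      t₀ Set.self_mem_Ici t ht ht
  set T : ℝ := max 1 (2 * t₀) with hT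
  have hT1 : (1:ℝ) ≤ T := le_max_left _ _
  have ht₀T : t₀ ≤ T := by
    rcases le_total t₀ 0 with h | h
    · linarith [le_max_left (1:ℝ) (2 * t₀)]
    · linarith [le_max_right (1:ℝ) (2 * t₀)]
  -- linear lower bound on α for t ≥ T
  have hαgrow : ∀ t : ℝ, T ≤ t → m / 2 * t ≤ α t := by
    intro t ht
    have h1 : t₀ ≤ t := le_trans ht₀T ht
    have h2 := hgrow t h1
    have h3 : 2 * t₀ ≤ t := le_trans (le_max_right _ _) ht
    have h4 := hαpos t₀
    nlinarith [ht₀]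
  have hb4 : (0:ℝ) < b ^ 4 := by nlinarith [hb2]
  obtain ⟨C, hCdef⟩ : ∃ C : ℝ, C = 2 * e₀ ^ 3 / b ^ 4 + b ^ 2 := ⟨_, rfl⟩
  have hCpos : 0 < C := hCdef ▸ add_pos (div_pos (by positivity) hb4) hb2
  obtain ⟨K, hKdef⟩ : ∃ K : ℝ, K = C / (Real.sqrt e₀ * (m / 2) ^ 2) := ⟨_, rfl⟩
  have hKpos : 0 < K := hKdef ▸ div_pos hCpos
    (mul_pos hse (pow_pos (by linarith [ht₀] : (0:ℝ) < m / 2) 2))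
  -- the quantitative bound
  have hquant : ∀ t : ℝ, T ≤ t →
      0 < Real.sqrt e₀ - deriv α t ∧ Real.sqrt e₀ - deriv α t ≤ K / t ^ 2 := by
    intro t ht
    have hA := hαpos t
    have h1t : (1:ℝ) ≤ t := le_trans hT1 ht
    have htpos : (0:ℝ) < t := by linarith
    have hd0 : 0 < deriv α t := lt_of_lt_of_le ht₀ (hmono.monotone (le_trans ht₀T ht))
    have hmt : m / 2 * t ≤ α t := hαgrow t ht
    refine ⟨sub_pos.mpr (hdlt t), ?_⟩
    -- key bound: e₀ - d² ≤ C / A²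
    have hbA : b ^ 2 ≤ e₀ * α t ^ 2 := by
      nlinarith [hE t, pow_pos hA 4,
        mul_nonneg (by positivity : (0:ℝ) ≤ α t ^ 6 + 2) (sq_nonneg (deriv α t))]
    have h2 : b ^ 4 ≤ e₀ ^ 2 * α t ^ 4 := by nlinarith [hbA, hb2]
    have h1b : (e₀ - (deriv α t) ^ 2) * α t ^ 6 * b ^ 4
        = 2 * (deriv α t) ^ 2 * b ^ 4 + b ^ 6 * α t ^ 4 := by
      linear_combination (-(b ^ 4)) * (hE t)
    have key : e₀ - (deriv α t) ^ 2 ≤ C / α t ^ 2 := by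
      rw [hCdef, div_add' _ _ _ (ne_of_gt hb4), div_div, le_div_iff₀ (mul_pos hb4 (pow_pos hA 2))]
      nlinarith [h1b, h2, (hd2 t).le, pow_pos hA 4, pow_pos hA 2,
        mul_le_mul (hd2 t).le h2 hb4.le he₀.le]
    have step1 : Real.sqrt e₀ - deriv α t ≤ (e₀ - (deriv α t) ^ 2) / Real.sqrt e₀ := by
      rw [le_div_iff₀ hse]
      nlinarith [hdlt t, hd0, hse2]
    have hA2 : (m / 2) ^ 2 * t ^ 2 ≤ α t ^ 2 := by
      nlinarith [mul_le_mul hmt hmt (mul_nonneg (by linarith : (0:ℝ) ≤ m / 2) htpos.le) hA.le]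
    have hmt2 : (0:ℝ) < (m / 2) ^ 2 * t ^ 2 :=
      mul_pos (pow_pos (by linarith : (0:ℝ) < m / 2) 2) (pow_pos htpos 2)
    have step3 : C / α t ^ 2 ≤ C / ((m / 2) ^ 2 * t ^ 2) :=
      div_le_div_of_nonneg_left hCpos.le hmt2 hA2
    have heq : C / ((m / 2) ^ 2 * t ^ 2) / Real.sqrt e₀ = K / t ^ 2 := by
      rw [hKdef]
      field_simp
    calc Real.sqrt e₀ - deriv α t ≤ (e₀ - (deriv α t) ^ 2) / Real.sqrt e₀ := step1
      _ ≤ C / α t ^ 2 / Real.sqrt e₀ := by gcongr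
      _ ≤ C / ((m / 2) ^ 2 * t ^ 2) / Real.sqrt e₀ := by gcongr
      _ = K / t ^ 2 := heq
  -- tendsto via squeeze
  have htend : Tendsto (deriv α) atTop (nhds (Real.sqrt e₀)) := by
    have hg : Tendsto (fun t : ℝ => Real.sqrt e₀ - K / t ^ 2) atTop (nhds (Real.sqrt e₀)) := by
      have h0 : Tendsto (fun t : ℝ => K / t ^ 2) atTop (nhds 0) :=
        tendsto_const_nhds.div_atTop (tendsto_pow_atTop (by norm_num))
      simpa using tendsto_const_nhds.sub h0
    refine tendsto_of_tendsto_of_tendsto_of_le_of_le' hg tendsto_const_nhds ?_ ?_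
    · filter_upwards [eventually_ge_atTop T] with t ht
      linarith [(hquant t ht).2]
    · filter_upwards with t
      exact (hdlt t).le
  exact ⟨hacc, hαlb, hmono, htend, T, K, hT1, hKpos, hquant⟩
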